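/- Consensus deviation of proximal images from their average (Lemma 2, inequality (25a)): Let E be a normed real vector space, N ≥ 1, P : E → E nonexpansive, c ≥ 0, and let Q be an N×N real matrix with |Q_{ij} − 1/N| ≤ c for all i, j. Given z^1, …, z^N ∈ E, define y^i := ∑_{j=1}^N Q_{ij} z^j, x^i := P(y^i), and x̄ := (1/N)∑_{i=1}^N x^i. Then ∑_{i=1}^N ‖x̄ − x^i‖ ≤ 2cN·∑_{j=1}^N ‖z^j‖. -/

import Mathlib

/-- Consensus deviation of proximal images from their average (Lemma 2, (25a)). -/
theorem consensus_deviation_prox_images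
    {E : Type*} [NormedAddCommGroup E] [NormedSpace ℝ E]
    (N : ℕ) (hN : 1 ≤ N)
    (P : E → E) (hP : ∀ x y, ‖P x - P y‖ ≤ ‖x - y‖)
    (c : ℝ) (hc : 0 ≤ c)
    (Q : Fin N → Fin N → ℝ) (hQ : ∀ i j, |Q i j - 1 / N| ≤ c)
    (z y x : Fin N → E)
    (hy : ∀ i, y i = ∑ j, Q i j • z j)
    (hx : ∀ i, x i = P (y i)) :
    ∑ i, ‖(N : ℝ)⁻¹ • (∑ j, x j) - x i‖ ≤ 2 * c * N * ∑ j, ‖z j‖ := by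
  have hNpos : (0:ℝ) < N := by exact_mod_cast hN
  have key : ∀ k i : Fin N, ‖x k - x i‖ ≤ 2 * c * ∑ j, ‖z j‖ := by
    intro k i
    rw [hx, hx]
    refine (hP _ _).trans ?_
    rw [hy, hy, ← Finset.sum_sub_distrib]
    have : ∀ j : Fin N, Q k j • z j - Q i j • z j = (Q k j - Q i j) • z j := by
      intro j; rw [sub_smul]
    simp_rw [this]
    refine (norm_sum_le _ _).trans ?_
    rw [Finset.mul_sum]
    refine Finset.sum_le_sum fun j _ => ?_
    rw [norm_smul, Real.norm_eq_abs]
    refine mul_le_mul_of_nonneg_right ?_ (norm_nonneg _)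
    calc |Q k j - Q i j| = |(Q k j - 1/N) + (1/N - Q i j)| := by ring_nf
      _ ≤ |Q k j - 1/N| + |1/N - Q i j| := abs_add_le _ _
      _ ≤ c + c := add_le_add (hQ k j) (by rw [abs_sub_comm]; exact hQ i j)
      _ = 2 * c := by ring
  have step : ∀ i : Fin N, ‖(N : ℝ)⁻¹ • (∑ j, x j) - x i‖ ≤ 2 * c * ∑ j, ‖z j‖ := by
    intro i
    have heq : (N : ℝ)⁻¹ • (∑ j, x j) - x i = (N : ℝ)⁻¹ • (∑ j, (x j - x i)) := by
      rw [Finset.sum_sub_distrib, smul_sub, Finset.sum_const, Finset.card_univ,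
        Fintype.card_fin, ← Nat.cast_smul_eq_nsmul ℝ, smul_smul,
        inv_mul_cancel₀ (ne_of_gt hNpos), one_smul]
    rw [heq, norm_smul, Real.norm_eq_abs, abs_of_pos (inv_pos.mpr hNpos)]
    calc (N:ℝ)⁻¹ * ‖∑ j, (x j - x i)‖
        ≤ (N:ℝ)⁻¹ * ∑ j, ‖x j - x i‖ :=
          mul_le_mul_of_nonneg_left (norm_sum_le _ _) (by positivity)
      _ ≤ (N:ℝ)⁻¹ * ∑ _j : Fin N, (2 * c * ∑ j, ‖z j‖) :=
          mul_le_mul_of_nonneg_left (Finset.sum_le_sum fun j _ => key j i) (by positivity)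
      _ = 2 * c * ∑ j, ‖z j‖ := by
          rw [Finset.sum_const, Finset.card_univ, Fintype.card_fin, nsmul_eq_mul]
          field_simp
  calc ∑ i, ‖(N : ℝ)⁻¹ • (∑ j, x j) - x i‖
      ≤ ∑ _i : Fin N, (2 * c * ∑ j, ‖z j‖) := Finset.sum_le_sum fun i _ => step i
    _ = 2 * c * N * ∑ j, ‖z j‖ := by
        rw [Finset.sum_const, Finset.card_univ, Fintype.card_fin, nsmul_eq_mul]; ring
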